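/- arXiv:1712.04921 — 9 statements merged into one kernel-verified Lean document; each statement's English description precedes it below -/
import Mathlib

section
/- Let $d = 2g+1$ be an odd prime, $p$ a prime with $p \not\equiv 1 \pmod d$ and $p \ne d$. Then there exists $i \in \{1, \dots, g\}$ such that the residue of $pi$ modulo $d$ lies in $\{g+1, \dots, 2g\}$. -/
theorem stmt4 (d g p : ℕ) (hd : d.Prime) (hdg : d = 2 * g + 1) (hgpos : 0 < g)
    (hp : p.Prime) (hp1 : ¬ p ≡ 1 [MOD d]) (hpd : p ≠ d) :
    ∃ i ∈ Finset.Icc 1 g, (p * i) % d ∈ Finset.Icc (g + 1) (2 * g) := by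
  by_contra hcon
  push_neg at hcon
  have hdp : ¬ d ∣ p := fun h => hpd ((Nat.prime_dvd_prime_iff_eq hd hp).mp h).symm
  have hcop : Nat.Coprime p d := Nat.coprime_comm.mp (hd.coprime_iff_not_dvd.mpr hdp)
  have hmem : ∀ i ∈ Finset.Icc 1 g, (p * i) % d ∈ Finset.Icc 1 g := by
    intro i hi
    have hi' := Finset.mem_Icc.mp hi
    have hne : (p * i) % d ≠ 0 := by
      intro h
      have hdvd : d ∣ p * i := Nat.dvd_of_mod_eq_zero h
      rcases (Nat.Prime.dvd_mul hd).mp hdvd with h1 | h1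
      · exact hdp h1
      · have := Nat.le_of_dvd (by omega) h1
        omega
    have hlt : (p * i) % d < d := Nat.mod_lt _ (by omega)
    have := hcon i hi
    simp only [Finset.mem_Icc] at this ⊢
    omega
  set f : ℕ → ℕ := fun i => (p * i) % d with hf
  have hinj : Set.InjOn f (Finset.Icc 1 g) := by
    intro i hi j hj hij
    simp only [Finset.coe_Icc, Set.mem_Icc] at hi hj
    have h1 : p * i ≡ p * j [MOD d] := hij
    have h2 : i ≡ j [MOD d] :=
      Nat.ModEq.cancel_left_of_coprime hcop.symm h1
    have h3 : i % d = j % d := h2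
    rw [Nat.mod_eq_of_lt (by omega), Nat.mod_eq_of_lt (by omega)] at h3
    exact h3
  have himg : Finset.image f (Finset.Icc 1 g) = Finset.Icc 1 g := by
    apply Finset.eq_of_subset_of_card_le
    · intro x hx
      rcases Finset.mem_image.mp hx with ⟨i, hi, rfl⟩
      exact hmem i hi
    · rw [Finset.card_image_of_injOn hinj]
  have hsum : ∑ i ∈ Finset.Icc 1 g, f i = ∑ i ∈ Finset.Icc 1 g, i := by
    conv_rhs => rw [← himg]
    rw [Finset.sum_image (fun a ha b hb => hinj ha hb)]
  set S := ∑ i ∈ Finset.Icc 1 g, i with hS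
  have hmod : p * S ≡ S [MOD d] := by
    have : (p * S) % d = S % d := by
      calc (p * S) % d = (∑ i ∈ Finset.Icc 1 g, p * i) % d := by rw [Finset.mul_sum]
        _ = (∑ i ∈ Finset.Icc 1 g, (p * i) % d) % d := by rw [Finset.sum_nat_mod]
        _ = S % d := by rw [hsum]
    exact this
  have hSd : ¬ d ∣ S := by
    intro hdvdS
    have heq : ∑ i ∈ Finset.range (g + 1), i = S := by
      rw [Finset.range_eq_Ico, Finset.sum_eq_sum_Ico_succ_bot (by omega) (fun i => i), hS,
        ← Finset.Ico_add_one_right_eq_Icc]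
      simp
    have h2S : S * 2 = (g + 1) * g := by
      have := Finset.sum_range_id_mul_two (g + 1)
      rw [heq] at this
      simpa using this
    have hdvd2 : d ∣ (g + 1) * g := h2S ▸ hdvdS.mul_right 2
    rcases (Nat.Prime.dvd_mul hd).mp hdvd2 with h1 | h1
    · have := Nat.le_of_dvd (by omega) h1; omega
    · have := Nat.le_of_dvd (by omega) h1; omega
  have hcopS : Nat.Coprime S d := Nat.coprime_comm.mp (hd.coprime_iff_not_dvd.mpr hSd)
  have : p ≡ 1 [MOD d] := by
    have h1 : p * S ≡ 1 * S [MOD d] := by simpa using hmod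
    exact Nat.ModEq.cancel_right_of_coprime hcopS.symm h1
  exact hp1 this
end

section
/- Let $d = 2g+1$ be an odd prime with $g$ prime, and let $p$ be a prime with $p \not\equiv 1 \pmod d$ and $p \not\equiv -1 \pmod d$ and $p \ne d$. Let $K$ be a field and let $H$ be a $g \times g$ matrix over $K$ such that $H_{i,j} = 0$ whenever $d \nmid pi - j$ (indices $1 \le i, j \le g$). Then $H^g = 0$, i.e., $H$ is nilpotent. -/
theorem stmt7 (d g p : ℕ) (hd : d.Prime) (hdodd : Odd d) (hdg : d = 2 * g + 1)
    (hg : g.Prime) (hp : p.Prime) (hpd : p ≠ d)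
    (hp1 : ¬ p ≡ 1 [MOD d]) (hpm1 : ¬ (p : ℤ) ≡ -1 [ZMOD (d : ℤ)])
    (K : Type*) [Field K] (H : Matrix (Fin g) (Fin g) K)
    (hH : ∀ i j : Fin g, ¬ (d : ℤ) ∣ (p * (i.val + 1) - (j.val + 1) : ℤ) → H i j = 0) :
    H ^ g = 0 := by
  haveI : Fact d.Prime := ⟨hd⟩
  haveI : NeZero d := ⟨hd.ne_zero⟩
  have hg2 : 2 ≤ g := hg.two_le
  -- reformulate hH in ZMod d
  have hH' : ∀ i j : Fin g, H i j ≠ 0 →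
      ((j.val + 1 : ℕ) : ZMod d) = (p : ZMod d) * ((i.val + 1 : ℕ) : ZMod d) := by
    intro i j h
    have hdvd : (d : ℤ) ∣ (p * (i.val + 1) - (j.val + 1) : ℤ) := by
      by_contra hc
      exact h (hH i j hc)
    have := (ZMod.intCast_zmod_eq_zero_iff_dvd _ d).mpr hdvd
    push_cast at this ⊢
    linear_combination -this
  -- key induction: nonzero entries of H^n track multiplication by p mod d
  have key : ∀ n (i j : Fin g), (H ^ n) i j ≠ 0 →
      ((j.val + 1 : ℕ) : ZMod d) = (p : ZMod d) ^ n * ((i.val + 1 : ℕ) : ZMod d) ∧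
      ∀ k ≤ n, ∃ m : Fin g,
        ((m.val + 1 : ℕ) : ZMod d) = (p : ZMod d) ^ k * ((i.val + 1 : ℕ) : ZMod d) := by
    intro n
    induction n with
    | zero =>
      intro i j h
      rw [pow_zero] at h
      have hij : i = j := by
        by_contra hc
        exact h (Matrix.one_apply_ne hc)
      subst hij
      refine ⟨by rw [pow_zero, one_mul], ?_⟩
      intro k hk
      interval_cases k
      exact ⟨i, by rw [pow_zero, one_mul]⟩
    | succ n ih =>
      intro i j h
      rw [pow_succ] at h
      have : ∃ m, (H ^ n) i m * H m j ≠ 0 := by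
        by_contra hc
        push_neg at hc
        exact h (by rw [Matrix.mul_apply]; exact Finset.sum_eq_zero fun m _ => hc m)
      obtain ⟨m, hm⟩ := this
      have h1 := ih i m (left_ne_zero_of_mul hm)
      have h2 := hH' m j (right_ne_zero_of_mul hm)
      constructor
      · rw [h2, h1.1, pow_succ]; ring
      · intro k hk
        rcases Nat.lt_or_ge k (n + 1) with hlt | hge
        · exact h1.2 k (by omega)
        · have hk' : k = n + 1 := by omega
          subst hk'
          exact ⟨j, by rw [h2, h1.1, pow_succ]; ring⟩
  -- now show every entry of H^g is zero
  ext i j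
  simp only [Matrix.zero_apply]
  by_contra hij
  obtain ⟨hj, hall⟩ := key g i j hij
  -- p ≠ 0 and p ≠ 1 in ZMod d
  have hp0 : (p : ZMod d) ≠ 0 := by
    rw [Ne, ZMod.natCast_eq_zero_iff]
    intro hdvd
    exact hpd ((Nat.prime_dvd_prime_iff_eq hd hp).mp hdvd).symm
  have hpne1 : (p : ZMod d) ≠ 1 := by
    intro hc
    apply hp1
    have : (p : ZMod d) = ((1 : ℕ) : ZMod d) := by simpa using hc
    exact (ZMod.natCast_eq_natCast_iff _ _ _).mp this
  -- p^g = 1 or p^g = -1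
  have hfermat : (p : ZMod d) ^ (d - 1) = 1 := ZMod.pow_card_sub_one_eq_one hp0
  have hd1 : d - 1 = 2 * g := by omega
  have hsq : (p : ZMod d) ^ g * (p : ZMod d) ^ g = 1 := by
    rw [← pow_add]
    have hgg : g + g = d - 1 := by omega
    rw [hgg]; exact hfermat
  have hci : ((i.val + 1 : ℕ) : ZMod d) ≠ 0 := by
    rw [Ne, ZMod.natCast_eq_zero_iff]
    intro hdvd
    have := Nat.le_of_dvd (by omega) hdvd
    omega
  rcases mul_self_eq_one_iff.mp hsq with hpg1 | hpgm1
  · -- case p^g = 1 : sum / counting argument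
    have hord : orderOf (p : ZMod d) = g := by
      have hdvd : orderOf (p : ZMod d) ∣ g := orderOf_dvd_of_pow_eq_one hpg1
      rcases (Nat.Prime.eq_one_or_self_of_dvd hg _ hdvd) with h1 | h2
      · exact absurd (orderOf_eq_one_iff.mp h1) hpne1
      · exact h2
    set c : ZMod d := ((i.val + 1 : ℕ) : ZMod d) with hc
    -- the map k ↦ p^k * c is injective on range g
    have hinj : ∀ a ∈ Finset.range g, ∀ b ∈ Finset.range g,
        (p : ZMod d) ^ a * c = (p : ZMod d) ^ b * c → a = b := by
      intro a ha b hb hab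
      have hpb : (p : ZMod d) ^ a = (p : ZMod d) ^ b := mul_right_cancel₀ hci hab
      simp only [Finset.mem_range] at ha hb
      have hdvd : ∀ u v : ℕ, u ≤ v → (p : ZMod d) ^ u = (p : ZMod d) ^ v → g ∣ v - u := by
        intro u v huv he
        have hone : (p : ZMod d) ^ (v - u) = 1 := by
          have hv : v = u + (v - u) := by omega
          rw [hv, pow_add] at he
          have h' : (p : ZMod d) ^ u * 1 = (p : ZMod d) ^ u * (p : ZMod d) ^ (v - u) := by
            rw [mul_one]; exact he
          exact (mul_left_cancel₀ (pow_ne_zero u hp0) h').symm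
        rw [← hord]
        exact orderOf_dvd_of_pow_eq_one hone
      rcases le_total a b with hle | hle
      · rcases Nat.eq_zero_or_pos (b - a) with h0 | h0
        · omega
        · have := Nat.le_of_dvd h0 (hdvd a b hle hpb)
          omega
      · rcases Nat.eq_zero_or_pos (a - b) with h0 | h0
        · omega
        · have := Nat.le_of_dvd h0 (hdvd b a hle hpb.symm)
          omega
    have hinj2 : ∀ a ∈ Finset.range g, ∀ b ∈ Finset.range g,
        ((a + 1 : ℕ) : ZMod d) = ((b + 1 : ℕ) : ZMod d) → a = b := by
      intro a ha b hb hab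
      simp only [Finset.mem_range] at ha hb
      have h1 : ((a + 1 : ℕ) : ZMod d).val = a + 1 := ZMod.val_natCast_of_lt (by omega)
      have h2 : ((b + 1 : ℕ) : ZMod d).val = b + 1 := ZMod.val_natCast_of_lt (by omega)
      rw [hab] at h1
      omega
    set A : Finset (ZMod d) := (Finset.range g).image (fun k => (p : ZMod d) ^ k * c) with hA
    set L : Finset (ZMod d) := (Finset.range g).image (fun m => ((m + 1 : ℕ) : ZMod d)) with hL
    have hAL : A ⊆ L := by
      intro x hx
      rw [hA, Finset.mem_image] at hx
      obtain ⟨k, hk, hxk⟩ := hx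
      rw [Finset.mem_range] at hk
      obtain ⟨m, hmk⟩ := hall k (by omega)
      rw [hL, Finset.mem_image]
      exact ⟨m.val, Finset.mem_range.mpr m.isLt, by rw [hmk, ← hxk]⟩
    have hcardA : A.card = g := by
      rw [hA, Finset.card_image_of_injOn hinj, Finset.card_range]
    have hcardL : L.card = g := by
      rw [hL, Finset.card_image_of_injOn hinj2, Finset.card_range]
    have hALeq : A = L := Finset.eq_of_subset_of_card_le hAL (by omega)
    -- sum over A is zero (geometric series)
    have hsumA : ∑ x ∈ A, x = 0 := by
      rw [hA, Finset.sum_image hinj, ← Finset.sum_mul]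
      rw [geom_sum_eq hpne1, hpg1]
      simp
    -- sum over L
    have hsumL : ∑ x ∈ L, x = ((∑ m ∈ Finset.range g, (m + 1) : ℕ) : ZMod d) := by
      rw [hL, Finset.sum_image hinj2]
      push_cast
      rfl
    have hzero : ((∑ m ∈ Finset.range g, (m + 1) : ℕ) : ZMod d) = 0 := by
      rw [← hsumL, ← hALeq, hsumA]
    have hdvdS : d ∣ ∑ m ∈ Finset.range g, (m + 1) :=
      (ZMod.natCast_eq_zero_iff _ _).mp hzero
    have hsum2 : (∑ m ∈ Finset.range g, (m + 1)) * 2 = g * (g + 1) := by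
      have := Finset.sum_range_id_mul_two (g + 1)
      rw [Finset.sum_range_succ'] at this
      simpa [mul_comm] using this
    have hdvdgg : d ∣ g * (g + 1) := by
      rw [← hsum2]
      exact Dvd.dvd.mul_right hdvdS 2
    rcases (Nat.Prime.dvd_mul hd).mp hdvdgg with h1 | h2
    · have := Nat.le_of_dvd (by omega) h1; omega
    · have := Nat.le_of_dvd (by omega) h2; omega
  · -- case p^g = -1 : endpoints argument
    rw [hpgm1] at hj
    have : ((j.val + 1 + (i.val + 1) : ℕ) : ZMod d) = 0 := by
      push_cast
      push_cast at hj
      linear_combination hj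
    have hdvd := (ZMod.natCast_eq_zero_iff _ _).mp this
    have := Nat.le_of_dvd (by omega) hdvd
    omega
end

section
/- Let $d = 2g+1$ be an odd prime with $g$ prime, $p \ne d$ a prime with $p \not\equiv \pm 1 \pmod d$, and $K$ a field. If $H$ is a $g \times g$ matrix over $K$ with $H_{i,j} = 0$ whenever $d \nmid pi - j$, then the characteristic polynomial of $H$ is $T^g$. -/
open Polynomial

theorem stmt8 (d g p : ℕ) (hd : d.Prime) (hdodd : Odd d) (hdg : d = 2 * g + 1)
    (hg : g.Prime) (hp : p.Prime) (hpd : p ≠ d)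
    (hp1 : ¬ p ≡ 1 [MOD d]) (hpm1 : ¬ (p : ℤ) ≡ -1 [ZMOD (d : ℤ)])
    (K : Type*) [Field K] (H : Matrix (Fin g) (Fin g) K)
    (hH : ∀ i j : Fin g, ¬ (d : ℤ) ∣ (p * (i.val + 1) - (j.val + 1) : ℤ) → H i j = 0) :
    H.charpoly = X ^ g := by
  have hg2 : 2 ≤ g := hg.two_le
  have hd5 : 5 ≤ d := by omega
  haveI : Fact d.Prime := ⟨hd⟩
  set q : ZMod d := (p : ZMod d) with hqdef
  -- basic facts about q
  have hq0 : q ≠ 0 := by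
    rw [hqdef, Ne, ZMod.natCast_eq_zero_iff]
    intro hdvd
    exact hpd ((Nat.prime_dvd_prime_iff_eq hd hp).mp hdvd).symm
  have hq1 : q ≠ 1 := by
    intro h
    exact hp1 ((ZMod.natCast_eq_natCast_iff p 1 d).mp (by simpa using h))
  have hqm1 : q ≠ -1 := by
    intro h
    apply hpm1
    rw [← ZMod.intCast_eq_intCast_iff]
    push_cast
    exact h
  have hpow : q ^ (2 * g) = 1 := by
    have := ZMod.pow_card_sub_one_eq_one hq0
    rwa [show d - 1 = 2 * g by omega] at this
  set m : ℕ := orderOf q with hmdef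
  have hm2g : m ∣ 2 * g := orderOf_dvd_of_pow_eq_one hpow
  have hmpos : 0 < m :=
    orderOf_pos_iff.mpr (isOfFinOrder_iff_pow_eq_one.mpr ⟨2 * g, by omega, hpow⟩)
  have hqm : q ^ m = 1 := pow_orderOf_eq_one q
  have hq2 : q ^ 2 ≠ 1 := by
    intro h
    have h2 : (q - 1) * (q + 1) = 0 := by linear_combination h
    rcases mul_eq_zero.mp h2 with h3 | h3
    · exact hq1 (by linear_combination h3)
    · exact hqm1 (by linear_combination h3)
  have hm1 : m ≠ 1 := fun h => hq1 (by simpa [h] using hqm)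
  have hm2 : m ≠ 2 := fun h => hq2 (h ▸ hqm)
  have hgm : g ∣ m := by
    by_contra hngm
    have hco : Nat.Coprime g m := (Nat.Prime.coprime_iff_not_dvd hg).mpr hngm
    have h2' : m ∣ 2 := (Nat.Coprime.dvd_of_dvd_mul_right hco.symm) hm2g
    have := Nat.le_of_dvd (by norm_num) h2'
    omega
  -- the embedding of indices into ZMod d
  set e : Fin g → ZMod d := fun i => ((i.1 + 1 : ℕ) : ZMod d) with hedef
  have he0 : ∀ i, e i ≠ 0 := by
    intro i h
    rw [hedef, ZMod.natCast_eq_zero_iff] at h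
    have := Nat.le_of_dvd (by omega) h
    omega
  have heinj : Function.Injective e := by
    intro a b hab
    have ha := ZMod.val_cast_of_lt (show a.1 + 1 < d by omega)
    have hb := ZMod.val_cast_of_lt (show b.1 + 1 < d by omega)
    rw [hedef] at hab; simp only at hab
    rw [hab] at ha
    apply Fin.ext
    omega
  -- restatement of the hypothesis
  have hHq : ∀ i j : Fin g, H i j ≠ 0 → q * e i = e j := by
    intro i j hne
    by_contra hneq
    apply hne
    apply hH i j
    intro hdvd
    apply hneq
    have := (ZMod.intCast_zmod_eq_zero_iff_dvd _ d).mpr hdvd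
    push_cast at this
    rw [hedef]
    push_cast
    linear_combination this
  -- the key path lemma
  have key : ∀ (n : ℕ) (i j : Fin g), (H ^ n) i j ≠ 0 →
      (∀ a, a ≤ n → ∃ k, q ^ a * e i = e k) := by
    intro n
    induction n with
    | zero =>
      intro i j h a ha
      interval_cases a
      exact ⟨i, by simp⟩
    | succ n ih =>
      intro i j h
      rw [pow_succ'] at h
      rw [Matrix.mul_apply] at h
      obtain ⟨k, -, hk⟩ := Finset.exists_ne_zero_of_sum_ne_zero h
      have h1 : H i k ≠ 0 := fun h' => hk (by simp [h'])
      have h2 : (H ^ n) k j ≠ 0 := fun h' => hk (by simp [h'])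
      have hstep := hHq i k h1
      intro a ha
      match a with
      | 0 => exact ⟨i, by simp⟩
      | Nat.succ b =>
        obtain ⟨k', hk'⟩ := ih k j h2 b (by omega)
        refine ⟨k', ?_⟩
        rw [pow_succ, mul_assoc, hstep]
        exact hk'
  -- nilpotency
  have hnil : H ^ (2 * g) = 0 := by
    by_contra hne
    have : ∃ i j, (H ^ (2 * g)) i j ≠ 0 := by
      by_contra hall
      push_neg at hall
      exact hne (by ext i j; simpa using hall i j)
    obtain ⟨i, j, hij⟩ := this
    have hall := key (2 * g) i j hij
    have hm2g' : m ≤ 2 * g := Nat.le_of_dvd (by omega) hm2g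
    set S : Finset (ZMod d) := Finset.image e Finset.univ with hSdef
    have hScard : S.card = g := by
      rw [hSdef, Finset.card_image_of_injective _ heinj, Finset.card_univ, Fintype.card_fin]
    set T : Finset (ZMod d) := Finset.image (fun a => q ^ a * e i) (Finset.range m) with hTdef
    have hTS : T ⊆ S := by
      intro x hx
      rw [hTdef, Finset.mem_image] at hx
      obtain ⟨a, ha, rfl⟩ := hx
      rw [Finset.mem_range] at ha
      obtain ⟨k, hk⟩ := hall a (by omega)
      rw [hSdef, Finset.mem_image]
      exact ⟨k, Finset.mem_univ k, hk.symm⟩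
    have hqinj : ∀ a b : ℕ, a < m → b < m → q ^ a * e i = q ^ b * e i → a = b := by
      have aux : ∀ a b : ℕ, a ≤ b → b < m → q ^ a * e i = q ^ b * e i → a = b := by
        intro a b hab hbm hEq
        have h1 : q ^ a ≠ 0 := pow_ne_zero _ hq0
        have h2 : q ^ a * (q ^ (b - a) - 1) = 0 := by
          rw [mul_sub, ← pow_add, show a + (b - a) = b by omega, mul_one]
          have := mul_right_cancel₀ (he0 i) hEq
          exact sub_eq_zero.mpr this.symm
        have h3 : q ^ (b - a) = 1 := by
          rcases mul_eq_zero.mp h2 with h | h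
          · exact absurd h h1
          · linear_combination h
        have := orderOf_dvd_of_pow_eq_one h3
        rw [← hmdef] at this
        rcases Nat.eq_zero_of_dvd_of_lt this (by omega) |>.symm with h
        omega
      intro a b ha hb hEq
      rcases le_total a b with h | h
      · exact aux a b h hb hEq
      · exact (aux b a h ha hEq.symm).symm
    have hTcard : T.card = m := by
      rw [hTdef, Finset.card_image_of_injOn, Finset.card_range]
      intro a ha b hb hEq
      rw [Finset.mem_coe, Finset.mem_range] at ha hb
      exact hqinj a b ha hb hEq
    have hmg : m ≤ g := by
      have := Finset.card_le_card hTS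
      omega
    have hmeq : m = g := le_antisymm hmg (Nat.le_of_dvd hmpos hgm)
    have hgodd : Odd g := hg.odd_of_ne_two (by omega)
    have hTSeq : T = S := Finset.eq_of_subset_of_card_le hTS (by omega)
    -- membership of 1, 2, g in S = T
    have mem1 : (1 : ZMod d) ∈ S := by
      rw [hSdef, Finset.mem_image]
      exact ⟨⟨0, by omega⟩, Finset.mem_univ _, by rw [hedef]; norm_num⟩
    have mem2 : (2 : ZMod d) ∈ S := by
      rw [hSdef, Finset.mem_image]
      exact ⟨⟨1, by omega⟩, Finset.mem_univ _, by rw [hedef]; norm_num⟩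
    have memg : ((g : ℕ) : ZMod d) ∈ S := by
      rw [hSdef, Finset.mem_image]
      refine ⟨⟨g - 1, by omega⟩, Finset.mem_univ _, ?_⟩
      rw [hedef]; simp only
      congr 1
      omega
    rw [← hTSeq, hTdef, Finset.mem_image] at mem1 mem2 memg
    obtain ⟨c, hcR, hc⟩ := mem1
    obtain ⟨a, -, ha⟩ := mem2
    obtain ⟨b, -, hb⟩ := memg
    rw [Finset.mem_range] at hcR
    -- e i = q ^ (m - c)
    have hx : e i = q ^ (m - c) := by
      have h' : q ^ (m - c) * (q ^ c * e i) = e i := by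
        rw [← mul_assoc, ← pow_add, show m - c + c = m by omega, hqm, one_mul]
      rw [hc, mul_one] at h'
      exact h'.symm
    have h2g : (2 : ZMod d) * ((g : ℕ) : ZMod d) = -1 := by
      have h' : ((2 * g + 1 : ℕ) : ZMod d) = 0 := by rw [← hdg]; exact ZMod.natCast_self d
      push_cast at h'
      linear_combination h'
    have e2 : q ^ (a + (m - c)) = 2 := by rw [pow_add, ← hx]; exact ha
    have eg : q ^ (b + (m - c)) = ((g : ℕ) : ZMod d) := by rw [pow_add, ← hx]; exact hb
    have hN : q ^ (a + (m - c) + (b + (m - c))) = -1 := by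
      rw [pow_add, e2, eg]; exact h2g
    set N : ℕ := a + (m - c) + (b + (m - c)) with hNdef
    have h2N : q ^ (2 * N) = 1 := by
      rw [two_mul, pow_add, hN, neg_mul_neg, one_mul]
    have hmN : m ∣ 2 * N := orderOf_dvd_of_pow_eq_one h2N
    have hmodd : ¬ 2 ∣ m := by
      obtain ⟨t, ht⟩ := hgodd
      omega
    have hco2 : Nat.Coprime m 2 := ((Nat.prime_two.coprime_iff_not_dvd).mpr hmodd).symm
    have hmN' : m ∣ N := (Nat.Coprime.dvd_of_dvd_mul_left hco2) hmN
    have hqN : q ^ N = 1 := by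
      obtain ⟨t, ht⟩ := hmN'
      rw [ht, pow_mul, hqm, one_pow]
    have h1m1 : (1 : ZMod d) = -1 := hqN.symm.trans hN
    have h20 : ((2 : ℕ) : ZMod d) = 0 := by push_cast; linear_combination h1m1
    have := Nat.le_of_dvd (by norm_num) ((ZMod.natCast_eq_zero_iff 2 d).mp h20)
    omega
  -- conclude
  have hnilp : IsNilpotent H := ⟨2 * g, hnil⟩
  have hchar := Matrix.isNilpotent_charpoly_sub_pow_of_isNilpotent hnilp
  rw [Fintype.card_fin] at hchar
  have := hchar.eq_zero
  rwa [sub_eq_zero] at this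
end

section
/- Let $p$ be an odd prime and $d = 2g+1$ an odd prime with $p \equiv 1 \pmod d$, say $p = md + 1$. Define the $g \times g$ matrix $H$ over $\mathbb{F}_p$ by $H_{i,j} = c_{pi - j}$, where $(x^d+1)^{(p-1)/2} = \sum_k c_k x^k$ in $\mathbb{F}_p[x]$ (with $c_k = 0$ for $k < 0$ or $k > d(p-1)/2$). Then $H$ is a diagonal matrix with diagonal entries $H_{i,i} = \binom{(p-1)/2}{mi} \ne 0$ in $\mathbb{F}_p$; in particular, $H$ is invertible. -/
open Polynomial

private lemma auxCoeff {R : Type*} [CommSemiring R] (d N k : ℕ) (hd : 0 < d) :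
    ((X ^ d + 1 : R[X]) ^ N).coeff k = if d ∣ k then (N.choose (k / d) : R) else 0 := by
  rw [add_pow, finset_sum_coeff]
  have h1 : ∀ i ∈ Finset.range (N + 1),
      ((X ^ d : R[X]) ^ i * 1 ^ (N - i) * (N.choose i : R[X])).coeff k
        = if d * i = k then (N.choose i : R) else 0 := by
    intro i _
    rw [one_pow, mul_one, ← pow_mul, ← Polynomial.C_eq_natCast, coeff_mul_C, coeff_X_pow]
    by_cases h : k = d * i
    · simp [h]
    · rw [if_neg h, if_neg (fun hh => h hh.symm), zero_mul]
  rw [Finset.sum_congr rfl h1]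
  by_cases hdk : d ∣ k
  · obtain ⟨q, rfl⟩ := hdk
    rw [Nat.mul_div_cancel_left q hd, if_pos (dvd_mul_right d q)]
    by_cases hq : q ≤ N
    · rw [Finset.sum_eq_single q]
      · simp
      · intro b _ hb
        exact if_neg (fun h => hb (Nat.eq_of_mul_eq_mul_left hd h))
      · intro h; exact absurd (Finset.mem_range.mpr (Nat.lt_succ_of_le hq)) h
    · rw [Nat.choose_eq_zero_of_lt (lt_of_not_ge hq), Nat.cast_zero]
      refine Finset.sum_eq_zero fun b hb => ?_
      have hb' := Finset.mem_range.mp hb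
      refine if_neg fun h => ?_
      have hbq : b = q := Nat.eq_of_mul_eq_mul_left hd h
      omega
  · rw [if_neg hdk]
    refine Finset.sum_eq_zero fun b _ => ?_
    refine if_neg fun h => ?_
    exact hdk ⟨b, h.symm⟩

private lemma chooseNotDvd (p N n : ℕ) (hp : p.Prime) (hn : n ≤ N) (hN : N < p) :
    ¬ p ∣ N.choose n := by
  intro h
  have hdvd : N.choose n ∣ Nat.factorial N := by
    refine ⟨Nat.factorial n * Nat.factorial (N - n), ?_⟩
    rw [← mul_assoc, Nat.choose_mul_factorial_mul_factorial hn]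
  have := (Nat.Prime.dvd_factorial hp).mp (h.trans hdvd)
  omega

theorem stmt9 (p d g m : ℕ) (hp : p.Prime) (hpodd : Odd p) (hd : d.Prime)
    (hdodd : Odd d) (hdg : d = 2 * g + 1) (hpm : p = m * d + 1)
    (c : ℤ → ZMod p)
    (hc : ∀ k : ℕ, c k = (((X ^ d + 1) ^ ((p - 1) / 2) : (ZMod p)[X])).coeff k)
    (hcneg : ∀ k : ℤ, k < 0 → c k = 0)
    (H : Matrix (Fin g) (Fin g) (ZMod p))
    (hH : ∀ i j : Fin g, H i j = c (p * (i.val + 1) - (j.val + 1) : ℤ)) :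
    (∀ i j : Fin g, i ≠ j → H i j = 0) ∧
    (∀ i : Fin g, H i i = (Nat.choose ((p - 1) / 2) (m * (i.val + 1)) : ZMod p)) ∧
    (∀ i : Fin g, H i i ≠ 0) ∧ IsUnit H := by
  haveI := Fact.mk hp
  have hp2 : 2 ≤ p := hp.two_le
  have hd0 : 0 < d := hd.pos
  have hm1 : 1 ≤ m := by
    rcases Nat.eq_zero_or_pos m with h | h
    · subst h; simp at hpm; omega
    · exact h
  have hmeven : Even m := by
    rcases hpodd with ⟨s, hs⟩
    have h1 : Even (m * d) := ⟨s, by omega⟩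
    rcases Nat.even_mul.mp h1 with h | h
    · exact h
    · exact absurd h (Nat.not_even_iff_odd.mpr hdodd)
  obtain ⟨t, ht⟩ := hmeven
  have hmd : m * d = 2 * (t * d) := by rw [ht]; ring
  have hN : (p - 1) / 2 = t * d := by omega
  -- off-diagonal
  have hoff : ∀ i j : Fin g, i ≠ j → H i j = 0 := by
    intro i j hij
    have hi := i.isLt
    have hj := j.isLt
    have hkey : (p * (i.val + 1) - (j.val + 1) : ℤ)
        = ((p * (i.val + 1) - (j.val + 1) : ℕ) : ℤ) := by
      have : j.val + 1 ≤ p * (i.val + 1) := by nlinarith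
      push_cast [this]; ring
    rw [hH, hkey, hc]
    rw [auxCoeff _ _ _ hd0, if_neg]
    intro hdvd
    have hdvdz : (d : ℤ) ∣ ((p * (i.val + 1) - (j.val + 1) : ℕ) : ℤ) := Int.natCast_dvd_natCast.mpr hdvd
    rw [← hkey] at hdvdz
    have heq : (p * (i.val + 1) - (j.val + 1) : ℤ)
        = d * (m * (i.val + 1)) + ((i.val : ℤ) - j.val) := by
      rw [hpm]; push_cast; ring
    have hdvd2 : (d : ℤ) ∣ ((i.val : ℤ) - j.val) := by
      have := dvd_sub hdvdz ⟨(m * (i.val + 1) : ℤ), rfl⟩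
      rw [heq] at this
      simpa using this
    have hne : ((i.val : ℤ) - j.val) ≠ 0 := by
      intro h
      apply hij
      have hval : (i.val : ℤ) = j.val := by omega
      exact Fin.ext (by exact_mod_cast hval)
    have habs : |((i.val : ℤ) - j.val)| < d := by
      rw [abs_lt]
      constructor <;> push_cast <;> omega
    have hle := Int.le_of_dvd (abs_pos.mpr hne) ((dvd_abs _ _).mpr hdvd2)
    linarith
  -- diagonal
  have hdiagval : ∀ i : Fin g, H i i = (Nat.choose ((p - 1) / 2) (m * (i.val + 1)) : ZMod p) := by
    intro i
    have hi := i.isLt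
    have hkey : (p * (i.val + 1) - (i.val + 1) : ℤ) = ((d * (m * (i.val + 1)) : ℕ) : ℤ) := by
      rw [hpm]; push_cast; ring
    rw [hH, hkey, hc, auxCoeff _ _ _ hd0, if_pos (dvd_mul_right d _),
      Nat.mul_div_cancel_left _ hd0]
  have hdiagne : ∀ i : Fin g, H i i ≠ 0 := by
    intro i
    rw [hdiagval i]
    have hi := i.isLt
    have hle : m * (i.val + 1) ≤ (p - 1) / 2 := by
      rw [hN, ht]
      have h1 : 2 * (i.val + 1) ≤ d := by omega
      calc (t + t) * (i.val + 1) = t * (2 * (i.val + 1)) := by ring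
        _ ≤ t * d := Nat.mul_le_mul_left t h1
    have hNp : (p - 1) / 2 < p := by omega
    intro h
    exact chooseNotDvd p _ _ hp hle hNp ((ZMod.natCast_eq_zero_iff _ _).mp h)
  refine ⟨hoff, hdiagval, hdiagne, ?_⟩
  have hdiag : H = Matrix.diagonal (fun i => H i i) := by
    ext i j
    by_cases h : i = j
    · subst h; simp
    · rw [Matrix.diagonal_apply_ne _ h]; exact hoff i j h
  rw [Matrix.isUnit_iff_isUnit_det, hdiag, Matrix.det_diagonal, isUnit_iff_ne_zero]
  exact Finset.prod_ne_zero_iff.mpr fun i _ => hdiagne i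
end

section
/- Let $p$ be an odd prime and $d = 2g+1$ an odd prime with $p \equiv -1 \pmod d$. Define the $g \times g$ matrix $H$ over $\mathbb{F}_p$ by $H_{i,j} = c_{pi-j}$, where $(x^d+1)^{(p-1)/2} = \sum_k c_k x^k$ in $\mathbb{F}_p[x]$. Then $H$ is the zero matrix. -/
open Polynomial

lemma coeff_pow_zero_of_not_dvd {R : Type*} [CommSemiring R] (d m n : ℕ) (h : ¬ d ∣ n) :
    ((X ^ d + 1 : R[X]) ^ m).coeff n = 0 := by
  rw [add_pow]
  simp only [one_pow, mul_one, finset_sum_coeff, ← pow_mul]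
  apply Finset.sum_eq_zero
  intro k _
  rw [coeff_mul_natCast, coeff_X_pow]
  rw [if_neg (fun he => h ⟨k, he⟩), zero_mul]

theorem stmt10 (p d g : ℕ) (hp : p.Prime) (hpodd : Odd p) (hd : d.Prime)
    (hdodd : Odd d) (hdg : d = 2 * g + 1) (hpm1 : (p : ℤ) ≡ -1 [ZMOD (d : ℤ)])
    (c : ℤ → ZMod p)
    (hc : ∀ k : ℕ, c k = (((X ^ d + 1) ^ ((p - 1) / 2) : (ZMod p)[X])).coeff k)
    (hcneg : ∀ k : ℤ, k < 0 → c k = 0)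
    (H : Matrix (Fin g) (Fin g) (ZMod p))
    (hH : ∀ i j : Fin g, H i j = c (p * (i.val + 1) - (j.val + 1) : ℤ)) :
    H = 0 := by
  ext i j
  rw [hH]
  have hg : 0 < g := i.pos
  -- p ≥ d - 1 = 2g
  have hdvd : (d : ℤ) ∣ (p : ℤ) + 1 := by
    have := hpm1.sub_right (-1)
    simpa [Int.ModEq, Int.emod_emod_of_dvd, sub_neg_eq_add] using (Int.ModEq.dvd hpm1.symm)
  have hdpos : 0 < (d : ℤ) := by exact_mod_cast hd.pos
  have hple : (d : ℤ) ≤ (p : ℤ) + 1 := Int.le_of_dvd (by positivity) hdvd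
  have hpg : (2 * g : ℤ) ≤ (p : ℤ) := by
    have : (d : ℤ) = 2 * g + 1 := by exact_mod_cast congrArg (Nat.cast : ℕ → ℤ) hdg
    omega
  set k : ℤ := (p : ℤ) * (i.val + 1) - (j.val + 1) with hk
  have hj : (j.val : ℤ) + 1 ≤ g := by
    have := j.isLt; omega
  have hk0 : 0 ≤ k := by
    have h1 : (p : ℤ) ≤ (p : ℤ) * (i.val + 1) := by nlinarith [Int.natCast_nonneg i.val, Int.natCast_nonneg p]
    omega
  obtain ⟨n, hn⟩ := Int.eq_ofNat_of_zero_le hk0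
  have hnd : ¬ d ∣ n := by
    intro hdn
    have hdk : (d : ℤ) ∣ k := by rw [hn]; exact_mod_cast Int.natCast_dvd_natCast.mpr hdn
    have hmod : k ≡ -((i.val : ℤ) + j.val + 2) [ZMOD (d : ℤ)] := by
      have h1 : (p : ℤ) * (i.val + 1) ≡ -1 * (i.val + 1) [ZMOD (d : ℤ)] :=
        hpm1.mul_right _
      have h2 : k ≡ -1 * (i.val + 1) - (j.val + 1) [ZMOD (d : ℤ)] := h1.sub_right _
      calc k ≡ -1 * (i.val + 1) - (j.val + 1) [ZMOD (d : ℤ)] := h2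
        _ = -((i.val : ℤ) + j.val + 2) := by ring
    have hdvd2 : (d : ℤ) ∣ ((i.val : ℤ) + j.val + 2) := by
      have h5 : (d : ℤ) ∣ -((i.val : ℤ) + j.val + 2) := by
        simpa using (Int.ModEq.dvd hmod).add hdk
      exact (dvd_neg).mp h5
    have hle : (d : ℤ) ≤ (i.val : ℤ) + j.val + 2 := Int.le_of_dvd (by positivity) hdvd2
    have hi : (i.val : ℤ) + 1 ≤ g := by have := i.isLt; omega
    have : (d : ℤ) = 2 * g + 1 := by exact_mod_cast congrArg (Nat.cast : ℕ → ℤ) hdg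
    omega
  rw [hn, hc n, coeff_pow_zero_of_not_dvd d _ n hnd]
  simp
end

section
/- Let $d = 2g+1$ be an odd prime, and let $p \ne d$ be a prime such that multiplication by $p$ modulo $d$ maps the set $\{1, 2, \dots, g\}$ of residues into itself (i.e., for every $i \in \{1,\dots,g\}$, the residue of $pi$ mod $d$ lies in $\{1,\dots,g\}$). Then $p \equiv 1 \pmod d$. -/
theorem stmt13 (d g p : ℕ) (hd : d.Prime) (hdodd : Odd d) (hdg : d = 2 * g + 1)
    (hgpos : 0 < g) (hp : p.Prime) (hpd : p ≠ d)
    (hmap : ∀ i ∈ Finset.Icc 1 g, (p * i) % d ∈ Finset.Icc 1 g) :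
    p ≡ 1 [MOD d] := by
  haveI : Fact d.Prime := ⟨hd⟩
  have hcop : Nat.Coprime p d := (Nat.coprime_primes hp hd).mpr hpd
  set f : ℕ → ℕ := fun i => (p * i) % d with hf
  have hinj : ∀ i ∈ Finset.Icc 1 g, ∀ j ∈ Finset.Icc 1 g, f i = f j → i = j := by
    intro i hi j hj hij
    simp only [Finset.mem_Icc] at hi hj
    have h1 : p * i ≡ p * j [MOD d] := by
      unfold Nat.ModEq; simpa [hf] using hij
    have h2 : i ≡ j [MOD d] := h1.cancel_left_of_coprime hcop.symm
    have hi' : i % d = i := Nat.mod_eq_of_lt (by omega)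
    have hj' : j % d = j := Nat.mod_eq_of_lt (by omega)
    unfold Nat.ModEq at h2
    omega
  have himg : Finset.image f (Finset.Icc 1 g) = Finset.Icc 1 g := by
    apply Finset.eq_of_subset_of_card_le
    · intro x hx
      obtain ⟨i, hi, rfl⟩ := Finset.mem_image.mp hx
      exact hmap i hi
    · rw [Finset.card_image_of_injOn (fun a ha b hb => hinj a ha b hb)]
  have hsum : ∑ i ∈ Finset.Icc 1 g, f i = ∑ i ∈ Finset.Icc 1 g, i := by
    conv_rhs => rw [← himg]
    rw [Finset.sum_image hinj]
  have hz : (p : ZMod d) * (∑ i ∈ Finset.Icc 1 g, (i : ZMod d))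
      = ∑ i ∈ Finset.Icc 1 g, (i : ZMod d) := by
    have h := congrArg (fun n : ℕ => (n : ZMod d)) hsum
    simp only [Nat.cast_sum, hf, ZMod.natCast_mod, Nat.cast_mul] at h
    rw [Finset.mul_sum]
    exact h
  have hSnat : ¬ d ∣ ∑ i ∈ Finset.Icc 1 g, i := by
    intro h
    have hgauss : (∑ i ∈ Finset.Icc 1 g, i) * 2 = (g + 1) * g := by
      have h0 : ∑ i ∈ Finset.range (g + 1), i = ∑ i ∈ Finset.Icc 1 g, i := by
        rw [Finset.range_eq_Ico, ← Finset.Ico_add_one_right_eq_Icc,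
          ← Finset.Ico_union_Ico_eq_Ico (Nat.zero_le 1) (by omega : 1 ≤ g + 1),
          Finset.sum_union (Finset.Ico_disjoint_Ico_consecutive 0 1 (g + 1))]
        simp [Nat.succ_eq_add_one]
      rw [← h0, Finset.sum_range_id_mul_two]
      simp
    have h2 : d ∣ (g + 1) * g := hgauss ▸ (Dvd.dvd.mul_right h 2)
    rcases (Nat.Prime.dvd_mul hd).mp h2 with h3 | h3
    · exact absurd (Nat.le_of_dvd (by omega) h3) (by omega)
    · exact absurd (Nat.le_of_dvd hgpos h3) (by omega)
  have hS : (∑ i ∈ Finset.Icc 1 g, (i : ZMod d)) ≠ 0 := by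
    rw [← Nat.cast_sum]
    intro h
    exact hSnat ((ZMod.natCast_eq_zero_iff _ _).mp h)
  have hp1 : (p : ZMod d) = 1 := by
    have : ((p : ZMod d) - 1) * (∑ i ∈ Finset.Icc 1 g, (i : ZMod d)) = 0 := by
      rw [sub_mul, one_mul, hz, sub_self]
    rcases mul_eq_zero.mp this with h | h
    · linear_combination h
    · exact absurd h hS
  have := (ZMod.natCast_eq_natCast_iff p 1 d).mp (by simpa using hp1)
  exact this
end

section
/- Let $d = 2g+1$ be an odd prime with $g$ prime, and let $p \ne d$ be a prime with $p \not\equiv 1 \pmod d$ and $p \not\equiv -1 \pmod d$. Then there exists $i \in \{1, \dots, g\}$ such that for all $j \in \{1, \dots, g\}$, $d \nmid pi - j$. -/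
theorem stmt14 (d g p : ℕ) (hd : d.Prime) (hdodd : Odd d) (hdg : d = 2 * g + 1)
    (hg : g.Prime) (hp : p.Prime) (hpd : p ≠ d)
    (hp1 : ¬ p ≡ 1 [MOD d]) (hpm1 : ¬ (p : ℤ) ≡ -1 [ZMOD (d : ℤ)]) :
    ∃ i ∈ Finset.Icc 1 g, ∀ j ∈ Finset.Icc 1 g, ¬ (d : ℤ) ∣ (p * i - j : ℤ) := by
  have hg2 : 2 ≤ g := hg.two_le
  have hd0 : 0 < d := by omega
  set a := p % d with ha
  have had : a < d := Nat.mod_lt _ hd0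
  have ha0 : a ≠ 0 := by
    intro h
    exact hpd ((Nat.prime_dvd_prime_iff_eq hd hp).mp (Nat.dvd_of_mod_eq_zero h)).symm
  have ha1 : a ≠ 1 := by
    intro h
    apply hp1
    show p % d = 1 % d
    rw [← ha, h, Nat.mod_eq_of_lt (by omega)]
  have ha2g : a ≠ 2 * g := by
    intro h
    apply hpm1
    have hk := Nat.div_add_mod p d
    rw [← ha, h] at hk
    have hpz : (p : ℤ) = d * (p / d : ℕ) + 2 * g := by exact_mod_cast hk.symm
    have hdvd : (d : ℤ) ∣ (-1 : ℤ) - p := by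
      refine ⟨-((p / d : ℕ) + 1), ?_⟩
      rw [hpz]; push_cast [hdg]; ring
    exact Int.modEq_iff_dvd.mpr hdvd
  -- key lemma: if (p*i) % d ≥ g+1 then i works
  have key : ∀ i ∈ Finset.Icc 1 g, g + 1 ≤ (p * i) % d →
      ∀ j ∈ Finset.Icc 1 g, ¬ (d : ℤ) ∣ (p * i - j : ℤ) := by
    intro i hi hm j hj hdvd
    simp only [Finset.mem_Icc] at hi hj
    set m := (p * i) % d with hmdef
    have hmd : m < d := Nat.mod_lt _ hd0
    have hk : (d : ℤ) * ((p * i) / d : ℕ) + m = (p : ℤ) * i := by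
      exact_mod_cast Nat.div_add_mod (p * i) d
    have hdvd2 : (d : ℤ) ∣ (m : ℤ) - j := by
      have h2 : ((m : ℤ) - j) = ((p : ℤ) * i - j) - d * ((p * i) / d : ℕ) := by
        rw [← hk]; ring
      rw [h2]; exact dvd_sub hdvd ⟨_, rfl⟩
    have hpos : 0 < (m : ℤ) - (j : ℤ) := by omega
    have := Int.le_of_dvd hpos hdvd2
    omega
  by_cases hcase : g + 1 ≤ a
  · have h1 : (1 : ℕ) ∈ Finset.Icc 1 g := Finset.mem_Icc.mpr ⟨le_refl 1, by omega⟩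
    refine ⟨1, h1, key 1 h1 ?_⟩
    rw [mul_one, ← ha]; exact hcase
  · -- 2 ≤ a ≤ g, take i = g / a + 1
    have ha2 : 2 ≤ a := by omega
    have hag : a ≤ g := by omega
    obtain ⟨q, hqdef⟩ : ∃ q, g / a = q := ⟨_, rfl⟩
    have h1 : q ≤ g / 2 := hqdef ▸ Nat.div_le_div_left ha2 (by norm_num)
    have h2 : g / 2 < g := Nat.div_lt_self (by omega) (by omega)
    have hile : q + 1 ≤ g := by omega
    have hiIcc : q + 1 ∈ Finset.Icc 1 g := Finset.mem_Icc.mpr ⟨by omega, hile⟩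
    have hq : a * q + g % a = g := by rw [← hqdef]; exact Nat.div_add_mod g a
    have hr : g % a < a := Nat.mod_lt _ (by omega)
    have hai : a * (q + 1) = a * q + a := Nat.mul_succ a q
    have hbound : g + 1 ≤ a * (q + 1) ∧ a * (q + 1) ≤ 2 * g := by
      rw [hai]
      generalize a * q = X at hq ⊢
      omega
    have hmod : (p * (q + 1)) % d = a * (q + 1) := by
      rw [Nat.mul_mod, ← ha, Nat.mod_eq_of_lt (show q + 1 < d by omega),
        Nat.mod_eq_of_lt (show a * (q + 1) < d by omega)]
    exact ⟨q + 1, hiIcc, key (q + 1) hiIcc (by rw [hmod]; exact hbound.1)⟩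
end

section
/- Let $K$ be a field, $n \ge 1$, and let $H$ be an $n \times n$ matrix over $K$ such that for every cyclic sequence $\alpha_1, \dots, \alpha_k$ (with $k \ge 1$, indices in $\{1,\dots,n\}$, and $\alpha_{k+1} := \alpha_1$) the product $\prod_{i=1}^k H_{\alpha_i, \alpha_{i+1}}$ is zero. Then the characteristic polynomial of $H$ equals $T^n$. -/
open Polynomial

theorem stmt15 (K : Type*) [Field K] (n : ℕ) (hn : 1 ≤ n)
    (H : Matrix (Fin n) (Fin n) K)
    (hH : ∀ (k : ℕ) [NeZero k] (α : Fin k → Fin n),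
      ∏ i : Fin k, H (α i) (α (i + 1)) = 0) :
    H.charpoly = X ^ n := by
  have hdiag : ∀ i, H i i = 0 := by
    intro i
    have := hH 1 (fun _ => i)
    simpa using this
  -- key: for every σ with a non-fixed point, some entry H y (σ y) vanishes at a
  -- non-fixed point y
  have key : ∀ σ : Equiv.Perm (Fin n), σ ≠ 1 → ∃ y, σ y ≠ y ∧ H y (σ y) = 0 := by
    intro σ hσ
    obtain ⟨x, hx⟩ : ∃ x, σ x ≠ x := by
      by_contra h
      push_neg at h
      exact hσ (Equiv.ext h)
    haveI : NeZero (orderOf σ) := ⟨(orderOf_pos σ).ne'⟩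
    have hcomm : ∀ k : ℕ, (σ ^ k) (σ x) = σ ((σ ^ k) x) := by
      intro k
      rw [← Equiv.Perm.mul_apply, ← pow_succ, pow_succ', Equiv.Perm.mul_apply]
    have h0 := hH (orderOf σ) (fun s => (σ ^ (s : ℕ)) x)
    obtain ⟨s, -, hs⟩ := Finset.prod_eq_zero_iff.mp h0
    have hval : ((s + 1 : Fin (orderOf σ)) : ℕ) = (s.val + 1) % orderOf σ := by
      rw [Fin.val_add, Fin.val_one']
      conv_rhs => rw [Nat.add_mod]
      rw [Nat.mod_eq_of_lt s.isLt]
    have hsucc : (σ ^ (((s + 1 : Fin (orderOf σ))) : ℕ)) x = σ ((σ ^ (s : ℕ)) x) := by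
      rw [hval]
      have h1 : σ ^ ((s.val + 1) % orderOf σ) = σ ^ (s.val + 1) := pow_mod_orderOf σ (s.val + 1)
      rw [h1, pow_succ, Equiv.Perm.mul_apply, hcomm]
    have hnonfix : σ ((σ ^ (s : ℕ)) x) ≠ (σ ^ (s : ℕ)) x := by
      intro h
      rw [← hcomm] at h
      exact hx ((σ ^ (s : ℕ)).injective h)
    exact ⟨(σ ^ (s : ℕ)) x, hnonfix, by rwa [hsucc] at hs⟩
  rw [Matrix.charpoly, Matrix.det_apply]
  rw [Finset.sum_eq_single_of_mem (1 : Equiv.Perm (Fin n)) (Finset.mem_univ _)]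
  · simp only [Equiv.Perm.sign_one, one_smul, Equiv.Perm.one_apply]
    have : ∀ i : Fin n, Matrix.charmatrix H i i = X := by
      intro i
      rw [Matrix.charmatrix_apply_eq, hdiag, map_zero, sub_zero]
    rw [Finset.prod_congr rfl (fun i _ => this i)]
    simp
  · intro σ _ hσ
    have hσinv : σ⁻¹ ≠ 1 := by
      intro h
      exact hσ (by rw [← inv_inv σ, h, inv_one])
    obtain ⟨y, hy1, hy2⟩ := key σ⁻¹ hσinv
    have hfix : σ (σ⁻¹ y) ≠ σ⁻¹ y := by
      rw [(show σ (σ⁻¹ y) = y from Equiv.apply_symm_apply σ y)]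
      exact fun h => hy1 h.symm
    have : Matrix.charmatrix H (σ (σ⁻¹ y)) (σ⁻¹ y) = 0 := by
      rw [Matrix.charmatrix_apply_ne _ _ _ hfix, (show σ (σ⁻¹ y) = y from Equiv.apply_symm_apply σ y), hy2,
        map_zero, neg_zero]
    have hz : ∏ i : Fin n, H.charmatrix (σ i) i = 0 :=
      Finset.prod_eq_zero (Finset.mem_univ (σ⁻¹ y)) this
    rw [hz, smul_zero]
end

section
/- Let $p$ be an odd prime, $d$ an odd prime with $d \ne p$, $g = (d-1)/2$, and let $H$ be the $g \times g$ Hasse–Witt matrix over $\mathbb{F}_p$ of the curve $y^2 = x^d + 1$, i.e., $H_{i,j} = c_{pi-j}$ where $(x^d+1)^{(p-1)/2} = \sum_k c_k x^k$ in $\mathbb{F}_p[x]$. Then $H$ is invertible if $p \equiv 1 \pmod d$, and $H$ is nilpotent if $p \not\equiv 1 \pmod d$ and $g$ is prime. -/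
open Polynomial

lemma aux_expand {R : Type*} [CommRing R] (d n : ℕ) :
    ((X ^ d + 1 : R[X]) ^ n) = ∑ m ∈ Finset.range (n+1), C ((n.choose m : R)) * X ^ (d * m) := by
  rw [add_pow]
  refine Finset.sum_congr rfl fun m _ => ?_
  rw [one_pow, mul_one, ← pow_mul, C_eq_natCast, mul_comm]

lemma aux_coeff_zero {R : Type*} [CommRing R] (d n k : ℕ) (hk : ¬ d ∣ k) :
    ((X ^ d + 1 : R[X]) ^ n).coeff k = 0 := by
  rw [aux_expand, finset_sum_coeff]
  refine Finset.sum_eq_zero fun m _ => ?_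
  rw [coeff_C_mul, coeff_X_pow, if_neg, mul_zero]
  rintro rfl; exact hk ⟨m, rfl⟩

lemma aux_coeff_dvd {R : Type*} [CommRing R] (d n m : ℕ) (hd : 0 < d) (hm : m ≤ n) :
    ((X ^ d + 1 : R[X]) ^ n).coeff (d * m) = (n.choose m : R) := by
  rw [aux_expand, finset_sum_coeff]
  rw [Finset.sum_eq_single m]
  · rw [coeff_C_mul, coeff_X_pow, if_pos rfl, mul_one]
  · intro b _ hb
    rw [coeff_C_mul, coeff_X_pow, if_neg, mul_zero]
    intro h; exact hb ((Nat.eq_of_mul_eq_mul_left hd h).symm)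
  · intro h; exact absurd (Finset.mem_range.mpr (Nat.lt_succ_of_le hm)) h

theorem stmt16 (p d g : ℕ) (hp : p.Prime) (hpodd : Odd p) (hd : d.Prime)
    (hdodd : Odd d) (hpd : p ≠ d) (hdg : d = 2 * g + 1)
    (c : ℤ → ZMod p)
    (hc : ∀ k : ℕ, c k = (((X ^ d + 1) ^ ((p - 1) / 2) : (ZMod p)[X])).coeff k)
    (hcneg : ∀ k : ℤ, k < 0 → c k = 0)
    (H : Matrix (Fin g) (Fin g) (ZMod p))
    (hH : ∀ i j : Fin g, H i j = c (p * (i.val + 1) - (j.val + 1) : ℤ)) :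
    (p ≡ 1 [MOD d] → IsUnit H) ∧
    (¬ p ≡ 1 [MOD d] → g.Prime → IsNilpotent H) := by
  haveI fp : Fact p.Prime := ⟨hp⟩
  haveI fd : Fact d.Prime := ⟨hd⟩
  have hd2 := hd.two_le
  have hp2 := hp.two_le
  have hg1 : 1 ≤ g := by
    rcases Nat.eq_or_lt_of_le hd2 with h|h
    · exfalso; rw [← h] at hdodd; exact (Nat.not_odd_iff_even.mpr (by decide)) hdodd
    · omega
  have hd0 : 0 < d := by omega
  -- F1 : nonzero coefficients have index divisible by d
  have F1 : ∀ k : ℤ, c k ≠ 0 → (d:ℤ) ∣ k := by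
    intro k hk
    by_contra hdk
    rcases lt_or_ge k 0 with h|h
    · exact hk (hcneg k h)
    · apply hk
      lift k to ℕ using h
      rw [hc]
      apply aux_coeff_zero
      intro hdvd; exact hdk (Int.natCast_dvd_natCast.mpr hdvd)
  constructor
  · -- p ≡ 1 [MOD d] : H is invertible
    intro h1
    have hdvd : d ∣ p - 1 := (Nat.modEq_iff_dvd' (by omega : 1 ≤ p)).mp h1.symm
    set qq := (p-1)/d with hqq
    have hqd : d * qq = p - 1 := Nat.mul_div_cancel' hdvd
    have h2 : (d:ℤ) * (qq:ℤ) = (p:ℤ) - 1 := by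
      have h2 := congrArg (Nat.cast : ℕ → ℤ) hqd
      rwa [Nat.cast_mul, Nat.cast_sub hp.one_lt.le, Nat.cast_one] at h2
    have hdiagval : ∀ i : Fin g, H i i ≠ 0 := by
      intro i
      have hi := i.isLt
      rw [hH]
      have harg : (p * (i.val+1) - (i.val+1) : ℤ) = ((d * (qq * (i.val+1)) : ℕ) : ℤ) := by
        push_cast
        linear_combination (-(i.val:ℤ)-1) * h2
      have hle : qq * (i.val+1) ≤ (p-1)/2 := by
        have hc1 : 2*(qq*(i.val+1)) = qq * (2*(i.val+1)) := by ring
        have hc2 : qq * (2*(i.val+1)) ≤ qq * (2*g) := Nat.mul_le_mul_left _ (by omega)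
        have hc3 : qq * (2*g) ≤ qq * d := Nat.mul_le_mul_left _ (by omega)
        have hc4 : qq * d = p - 1 := by rw [mul_comm]; exact hqd
        rw [Nat.le_div_iff_mul_le (by norm_num : 0 < 2)]
        linarith
      rw [harg, hc, aux_coeff_dvd _ _ _ hd0 hle]
      intro h0
      have hdvd2 := (ZMod.natCast_eq_zero_iff _ _).mp h0
      have hfac : p ∣ ((p-1)/2).factorial := by
        rw [← Nat.choose_mul_factorial_mul_factorial hle]
        exact Dvd.dvd.mul_right (Dvd.dvd.mul_right hdvd2 _) _
      have := (Nat.Prime.dvd_factorial hp).mp hfac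
      omega
    have hoffdiag : ∀ i j : Fin g, i ≠ j → H i j = 0 := by
      intro i j hij
      rw [hH]
      by_contra h0
      have hdd := F1 _ h0
      have h3 : (d:ℤ) ∣ ((i.val:ℤ) - j.val) := by
        have heq : (i.val:ℤ) - j.val
            = ((p:ℤ) * (i.val+1) - (j.val+1)) - ((d:ℤ)*(qq:ℤ)) * ((i.val:ℤ)+1) := by
          linear_combination ((i.val:ℤ)+1) * h2
        rw [heq]
        exact dvd_sub hdd ((Dvd.intro _ rfl).mul_right _)
      have hzero := Int.eq_zero_of_abs_lt_dvd h3 (by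
        have hi := i.isLt; have hj := j.isLt
        rw [abs_lt]; omega)
      exact hij (Fin.ext (by omega))
    have hdiag : H = Matrix.diagonal (fun i => H i i) := by
      ext i j
      rcases eq_or_ne i j with rfl|hij
      · rw [Matrix.diagonal_apply_eq]
      · rw [Matrix.diagonal_apply_ne _ hij, hoffdiag i j hij]
    rw [hdiag, Matrix.isUnit_iff_isUnit_det, Matrix.det_diagonal]
    exact isUnit_iff_ne_zero.mpr (Finset.prod_ne_zero_iff.mpr fun i _ => hdiagval i)
  · -- p ≢ 1 [MOD d], g prime : H is nilpotent
    intro h1 hgprime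
    have hg2 := hgprime.two_le
    -- single step
    have hstep : ∀ i j : Fin g, H i j ≠ 0 →
        ((j.val:ℕ)+1 : ZMod d) = (p:ZMod d) * ((i.val:ℕ)+1) := by
      intro i j h
      rw [hH] at h
      have hdvd := F1 _ h
      have h0 : ((p * (i.val+1) - (j.val+1) : ℤ) : ZMod d) = 0 :=
        (ZMod.intCast_zmod_eq_zero_iff_dvd _ _).mpr hdvd
      push_cast at h0
      linear_combination -h0
    have hmulne : ∀ (n : ℕ) (i j : Fin g), (H^(n+1)) i j ≠ 0 →
        ∃ k, H i k ≠ 0 ∧ (H^n) k j ≠ 0 := by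
      intro n i j h
      rw [pow_succ', Matrix.mul_apply] at h
      by_contra hc2
      push_neg at hc2
      apply h
      refine Finset.sum_eq_zero fun k _ => ?_
      rcases eq_or_ne (H i k) 0 with h0|h0
      · rw [h0, zero_mul]
      · rw [hc2 k h0, mul_zero]
    have key : ∀ (n : ℕ) (i j : Fin g), (H^n) i j ≠ 0 → ∀ l ≤ n,
        ∃ m : Fin g, ((m.val:ℕ)+1 : ZMod d) = (p:ZMod d)^l * ((i.val:ℕ)+1) := by
      intro n
      induction n with
      | zero =>
        intro i j h l hl
        have : l = 0 := Nat.le_zero.mp hl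
        subst this
        exact ⟨i, by simp⟩
      | succ n ih =>
        intro i j h l hl
        obtain ⟨k, hik, hkj⟩ := hmulne n i j h
        match l with
        | 0 => exact ⟨i, by simp⟩
        | l' + 1 =>
          obtain ⟨m, hm⟩ := ih k j hkj l' (Nat.succ_le_succ_iff.mp hl)
          refine ⟨m, ?_⟩
          rw [hm, hstep i k hik, pow_succ]
          ring
    refine ⟨g, ?_⟩
    ext i j
    rw [Matrix.zero_apply]
    by_contra hne
    have hS := key g i j hne
    have hi := i.isLt
    set u : ZMod d := ((i.val:ℕ)+1 : ZMod d) with hu_def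
    have hu : u ≠ 0 := by
      intro h0
      have := (ZMod.natCast_eq_zero_iff (i.val+1) d).mp (by
        push_cast; exact h0)
      have := Nat.le_of_dvd (by omega) this
      omega
    have SnoNeg : ∀ m m' : Fin g, ((m.val:ℕ)+1 : ZMod d) + ((m'.val:ℕ)+1) ≠ 0 := by
      intro m m' h0
      have hm := m.isLt; have hm' := m'.isLt
      have h2 : (((m.val+1) + (m'.val+1) : ℕ) : ZMod d) = 0 := by push_cast; linear_combination h0
      have hdvd := (ZMod.natCast_eq_zero_iff _ _).mp h2
      have := Nat.le_of_dvd (by omega) hdvd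
      omega
    have hp0 : (p : ZMod d) ≠ 0 := by
      intro h0
      have := (ZMod.natCast_eq_zero_iff _ _).mp h0
      exact hpd ((Nat.prime_dvd_prime_iff_eq hd hp).mp this).symm
    have hpow : (p:ZMod d)^(d-1) = 1 := ZMod.pow_card_sub_one_eq_one hp0
    set e := orderOf (p : ZMod d) with he_def
    have he_dvd : e ∣ 2 * g := by
      have := orderOf_dvd_of_pow_eq_one hpow
      rwa [show d - 1 = 2*g by omega] at this
    have he_pos : 0 < e := by
      rcases Nat.eq_zero_or_pos e with h0|h0
      · exfalso; rw [h0] at he_dvd; have := Nat.eq_zero_of_zero_dvd he_dvd; omega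
      · exact h0
    have he1 : e ≠ 1 := by
      intro h0
      have hq1 : (p:ZMod d) = 1 := orderOf_eq_one_iff.mp h0
      apply h1
      have : ((p:ℕ) : ZMod d) = ((1:ℕ) : ZMod d) := by rw [hq1, Nat.cast_one]
      exact (ZMod.natCast_eq_natCast_iff _ _ _).mp this
    have he2g : e ≤ 2*g := Nat.le_of_dvd (by omega) he_dvd
    have heodd : ¬ 2 ∣ e := by
      intro h2dvd
      have he2 : 2 ≤ e := by omega
      have hq : ((p:ZMod d)^(e/2))^2 = 1 := by
        rw [← pow_mul, Nat.div_mul_cancel h2dvd]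
        exact pow_orderOf_eq_one _
      have hqne : (p:ZMod d)^(e/2) ≠ 1 := by
        intro h0
        have hdd := orderOf_dvd_iff_pow_eq_one.mpr h0
        rw [← he_def] at hdd
        have := Nat.le_of_dvd (by omega) hdd
        omega
      have hq2 : (p:ZMod d)^(e/2) = -1 := by
        have hfact : ((p:ZMod d)^(e/2) - 1) * ((p:ZMod d)^(e/2) + 1) = 0 := by
          linear_combination hq
        rcases mul_eq_zero.mp hfact with h|h
        · exact absurd (sub_eq_zero.mp h) hqne
        · exact eq_neg_of_add_eq_zero_left h
      obtain ⟨m, hm⟩ := hS (e/2) (by omega)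
      obtain ⟨m0, hm0⟩ := hS 0 (Nat.zero_le g)
      apply SnoNeg m m0
      rw [hm, hm0, hq2, pow_zero]
      ring
    have hedvd_g : e ∣ g := by
      have hcop : Nat.Coprime e 2 :=
        (Nat.Prime.coprime_iff_not_dvd Nat.prime_two).mpr heodd |>.symm
      exact hcop.dvd_of_dvd_mul_left he_dvd
    have heg : e = g := ((Nat.Prime.eq_one_or_self_of_dvd hgprime e hedvd_g).resolve_left he1)
    have horb : ∀ l : ℕ, ∃ m : Fin g, ((m.val:ℕ)+1 : ZMod d) = (p:ZMod d)^l * u := by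
      intro l
      obtain ⟨m, hm⟩ := hS (l % e) (by have := Nat.mod_lt l he_pos; omega)
      refine ⟨m, ?_⟩
      rw [hm, he_def, pow_mod_orderOf]
    -- injectivity of the orbit map on Fin g
    have cancel : ∀ a b : ℕ, a < b → b < g → (p:ZMod d)^a * u = (p:ZMod d)^b * u → False := by
      intro a b hab hbg hEq
      have h1' : (p:ZMod d)^a = (p:ZMod d)^b := mul_right_cancel₀ hu hEq
      have hpa : (p:ZMod d)^a ≠ 0 := pow_ne_zero _ hp0
      have h2' : (p:ZMod d)^(b-a) = 1 := by
        have hx : (p:ZMod d)^a * (p:ZMod d)^(b-a) = (p:ZMod d)^a * 1 := by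
          rw [← pow_add, show a + (b-a) = b by omega, mul_one]
          exact h1'.symm
        exact mul_left_cancel₀ hpa hx
      have hdd := orderOf_dvd_iff_pow_eq_one.mpr h2'
      rw [← he_def] at hdd
      have := Nat.le_of_dvd (by omega) hdd
      omega
    set f : Fin g → ZMod d := fun l => (p:ZMod d)^(l.val:ℕ) * u with hf_def
    set s : Fin g → ZMod d := fun m => ((m.val:ℕ)+1 : ZMod d) with hs_def
    have hfinj : Function.Injective f := by
      intro a b hab
      rcases lt_trichotomy a.val b.val with h|h|h
      · exact (cancel _ _ h b.isLt hab).elim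
      · exact Fin.ext h
      · exact (cancel _ _ h a.isLt hab.symm).elim
    have hsinj : Function.Injective s := by
      intro a b hab
      have ha := a.isLt; have hb := b.isLt
      have h2 : (((a.val+1:ℕ)) : ZMod d) = ((b.val+1:ℕ) : ZMod d) := by
        push_cast; exact hab
      have h3 := congrArg ZMod.val h2
      rw [ZMod.val_natCast_of_lt (by omega), ZMod.val_natCast_of_lt (by omega)] at h3
      exact Fin.ext (by omega)
    have hsub : Finset.image f Finset.univ ⊆ Finset.image s Finset.univ := by
      intro x hx
      obtain ⟨l, _, rfl⟩ := Finset.mem_image.mp hx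
      obtain ⟨m, hm⟩ := horb l.val
      exact Finset.mem_image.mpr ⟨m, Finset.mem_univ m, hm⟩
    have heqset : Finset.image f Finset.univ = Finset.image s Finset.univ :=
      Finset.eq_of_subset_of_card_le hsub (by
        rw [Finset.card_image_of_injective _ hfinj, Finset.card_image_of_injective _ hsinj])
    have hmem : ∀ m : Fin g, ∃ l : Fin g, (p:ZMod d)^(l.val:ℕ) * u = ((m.val:ℕ)+1 : ZMod d) := by
      intro m
      have hx : s m ∈ Finset.image f Finset.univ := by
        rw [heqset]
        exact Finset.mem_image_of_mem s (Finset.mem_univ m)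
      obtain ⟨l, _, hl⟩ := Finset.mem_image.mp hx
      exact ⟨l, hl⟩
    obtain ⟨t, ht⟩ := hmem ⟨0, by omega⟩
    obtain ⟨a, ha⟩ := hmem ⟨1, by omega⟩
    obtain ⟨b, hb⟩ := hmem ⟨g-1, by omega⟩
    simp only [Nat.cast_zero, Nat.cast_one, zero_add] at ht ha hb
    have hpg : (p:ZMod d)^(g:ℕ) = 1 := by rw [← heg]; exact pow_orderOf_eq_one _
    have huval : u = (p:ZMod d)^(g - t.val) := by
      have ht' := t.isLt
      have hx : (p:ZMod d)^(g - t.val) = (p:ZMod d)^(g - t.val) * ((p:ZMod d)^(t.val) * u) := by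
        rw [ht, mul_one]
      rw [← mul_assoc, ← pow_add, show g - t.val + t.val = g by omega, hpg, one_mul] at hx
      exact hx.symm
    have hkey2 : ((1:ℕ)+1 : ZMod d) * (((g-1:ℕ):ZMod d)+1)
        = (p:ZMod d)^(a.val + b.val + (g - t.val)) * u := by
      calc ((1:ℕ)+1 : ZMod d) * (((g-1:ℕ):ZMod d)+1)
          = ((p:ZMod d)^(a.val) * u) * ((p:ZMod d)^(b.val) * u) := by rw [ha, hb]; push_cast; ring
        _ = (p:ZMod d)^(a.val + b.val) * (u * u) := by rw [pow_add]; ring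
        _ = (p:ZMod d)^(a.val + b.val) * ((p:ZMod d)^(g - t.val) * u) := by
              nth_rewrite 2 [huval]; ring_nf
        _ = (p:ZMod d)^(a.val + b.val + (g - t.val)) * u := by rw [pow_add]; ring
    have hval : ((1:ℕ)+1 : ZMod d) * (((g-1:ℕ):ZMod d)+1) = -1 := by
      have hz : ((2*g+1 : ℕ) : ZMod d) = 0 := by rw [← hdg]; exact ZMod.natCast_self d
      have hg' : ((g-1:ℕ) : ZMod d) + 1 = (g : ZMod d) := by
        have hgg : ((g-1:ℕ)+1 : ℕ) = g := by omega
        calc ((g-1:ℕ) : ZMod d) + 1 = (((g-1)+1 : ℕ) : ZMod d) := by push_cast; ring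
          _ = (g : ZMod d) := by rw [hgg]
      rw [hg']
      push_cast at hz ⊢
      linear_combination hz
    obtain ⟨m, hm⟩ := horb (a.val + b.val + (g - t.val))
    apply SnoNeg m ⟨0, by omega⟩
    rw [hm, ← hkey2, hval]
    simp
end
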